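/- arXiv:1401.0489 — 2 statements merged into one kernel-verified Lean document; each statement's English description precedes it below -/
import Mathlib

section
/- Let π be a permutation of an n-element set of order N, let p be a prime with p^β exactly dividing N (β ≥ 1), and let n' be the number of points whose cycle length under π is divisible by p^β. Then π^{N/p} is not the identity and fixes all but n' points; that is, |supp(π^{N/p})| = n'. -/
/-- If `p ^ β` exactly divides the order `N` of a permutation `π` and `n'` counts the
points whose cycle length is divisible by `p ^ β`, then `π ^ (N / p)` is a nontrivial
power whose support has exactly `n'` points. -/
theorem stmt_3 (n : ℕ) (π : Equiv.Perm (Fin n)) (N p β n' : ℕ)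
    (hN : N = orderOf π) (hp : p.Prime) (hβ : 1 ≤ β)
    (hdvd : p ^ β ∣ N) (hndvd : ¬ p ^ (β + 1) ∣ N)
    (hn' : n' =
      (Finset.univ.filter (fun x : Fin n => p ^ β ∣ Function.minimalPeriod π x)).card) :
    π ^ (N / p) ≠ 1 ∧ (π ^ (N / p)).support.card = n' := by
  have hN0 : 0 < N := hN ▸ orderOf_pos π
  have hpN : p ∣ N := dvd_trans (dvd_pow_self p (Nat.one_le_iff_ne_zero.mp hβ)) hdvd
  constructor
  · intro h
    have h1 : orderOf π ∣ N / p := orderOf_dvd_of_pow_eq_one h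
    rw [← hN] at h1
    have h2 : N / p < N := Nat.div_lt_self hN0 hp.one_lt
    have h3 : 0 < N / p := Nat.div_pos (Nat.le_of_dvd hN0 hpN) hp.pos
    have := Nat.le_of_dvd h3 h1
    omega
  · rw [hn']
    congr 1
    ext x
    simp only [Equiv.Perm.mem_support, Finset.mem_filter, Finset.mem_univ, true_and]
    set m := Function.minimalPeriod π x with hm
    have hmd : m ∣ N := by
      apply Function.IsPeriodicPt.minimalPeriod_dvd
      show π^[N] x = x
      rw [Equiv.Perm.iterate_eq_pow, hN, pow_orderOf_eq_one]
      rfl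
    have hm0 : 0 < m := Nat.pos_of_ne_zero fun h0 => by
      have := Nat.eq_zero_of_zero_dvd (h0 ▸ hmd)
      omega
    have haux : (π ^ (N / p)) x = x ↔ m ∣ N / p := by
      rw [← Function.isPeriodicPt_iff_minimalPeriod_dvd, Function.IsPeriodicPt,
        Function.IsFixedPt, Equiv.Perm.iterate_eq_pow]
    have key : (π ^ (N / p)) x ≠ x ↔ p ^ β ∣ m := by
      rw [Ne, haux]
      rw [Nat.dvd_div_iff_mul_dvd hpN]
      constructor
      · -- ¬ p * m ∣ N → p ^ β ∣ m
        intro h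
        by_contra hc
        apply h
        -- ν_p m ≤ β - 1
        have hνm : (m.factorization p) < β := by
          by_contra hle
          exact hc (dvd_trans (pow_dvd_pow p (by omega)) (Nat.ordProj_dvd m p))
        -- m = p^ν * m', with m' coprime to p, m' ∣ N
        have hcop : Nat.Coprime p (m / p ^ m.factorization p) :=
          Nat.coprime_ordCompl hp hm0.ne'
        have hm'N : (m / p ^ m.factorization p) ∣ N :=
          dvd_trans (Nat.ordCompl_dvd m p) hmd
        have hcop' : Nat.Coprime (p ^ β) (m / p ^ m.factorization p) :=
          Nat.Coprime.pow_left _ hcop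
        have hmul : p ^ β * (m / p ^ m.factorization p) ∣ N :=
          hcop'.mul_dvd_of_dvd_of_dvd hdvd hm'N
        calc p * m = p ^ (m.factorization p + 1) * (m / p ^ m.factorization p) := by
              rw [pow_succ, mul_comm (p ^ m.factorization p) p, mul_assoc,
                Nat.ordProj_mul_ordCompl_eq_self m p]
          _ ∣ p ^ β * (m / p ^ m.factorization p) :=
              mul_dvd_mul_right (pow_dvd_pow p (by omega)) _
          _ ∣ N := hmul
      · -- p ^ β ∣ m → ¬ p * m ∣ N
        intro hb h
        apply hndvd
        calc p ^ (β + 1) = p * p ^ β := by ring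
          _ ∣ p * m := mul_dvd_mul_left p hb
          _ ∣ N := h
    rw [key]
end

section
/- Let π be a permutation of an n-element set (n ≥ 2) whose order is greater than n^2. Then some nontrivial power of π fixes more than n/2 points. -/
/-- A permutation of an `n`-element set (`n ≥ 2`) of order greater than `n ^ 2` has
a nontrivial power fixing more than `n / 2` points. -/
theorem stmt_13 (n : ℕ) (hn : 2 ≤ n) (π : Equiv.Perm (Fin n))
    (h : n ^ 2 < orderOf π) :
    ∃ m : ℕ, π ^ m ≠ 1 ∧
      n < 2 * (Finset.univ.filter (fun x : Fin n => (π ^ m) x = x)).card := by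
  by_contra hcon
  push_neg at hcon
  set N := orderOf π with hN
  have hNpos : 0 < N := orderOf_pos π
  set c : Fin n → ℕ := fun x => Function.minimalPeriod π x with hc
  -- every point is periodic with period N
  have hper : ∀ x, Function.IsPeriodicPt π N x := by
    intro x
    have : (π ^ N) x = x := by rw [pow_orderOf_eq_one]; rfl
    simpa [Function.IsPeriodicPt, Function.IsFixedPt,
      Equiv.Perm.iterate_eq_pow] using this
  have hfix : ∀ m x, (π ^ m) x = x ↔ c x ∣ m := by
    intro m x
    rw [← Function.isPeriodicPt_iff_minimalPeriod_dvd]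
    simp [Function.IsPeriodicPt, Function.IsFixedPt, Equiv.Perm.iterate_eq_pow]
  have hcpos : ∀ x, 0 < c x := fun x =>
    Function.IsPeriodicPt.minimalPeriod_pos hNpos (hper x)
  have hcdvd : ∀ x, c x ∣ N := fun x => (hper x).minimalPeriod_dvd
  -- the minimal period is at most n
  have hcle : ∀ x, c x ≤ n := by
    intro x
    have hinj : (Set.Iio (c x)).InjOn (fun i => π^[i] x) :=
      Function.iterate_injOn_Iio_minimalPeriod
    have := Finset.card_le_card_of_injOn (fun i => π^[i] x)
      (fun i _ => Finset.mem_univ _)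
      (fun i hi j hj hij => hinj (Finset.mem_range.mp hi) (Finset.mem_range.mp hj) hij)
      (s := Finset.range (c x)) (t := Finset.univ)
    simpa using this
  set P := ∏ x : Fin n, c x with hP
  have hPne : P ≠ 0 := Finset.prod_ne_zero_iff.mpr fun x _ => (hcpos x).ne'
  have hPle : P ≤ n ^ n := by
    calc P ≤ ∏ _x : Fin n, n := Finset.prod_le_prod (fun x _ => le_of_lt (hcpos x))
            (fun x _ => hcle x)
    _ = n ^ n := by simp
  -- key divisibility
  have key : N ^ n ∣ P ^ 2 := by
    rw [← Nat.factorization_le_iff_dvd (pow_ne_zero _ hNpos.ne') (pow_ne_zero _ hPne)]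
    intro p
    rcases eq_or_ne (N.factorization p) 0 with h0 | h0
    · simp [Nat.factorization_pow, h0]
    · have hp : p.Prime := Nat.prime_of_mem_primeFactors
        (N.support_factorization ▸ Finsupp.mem_support_iff.mpr h0)
      have hpdvd : p ∣ N := Nat.dvd_of_factorization_pos h0
      set a := N.factorization p with ha
      have hapos : 1 ≤ a := Nat.one_le_iff_ne_zero.mpr h0
      set m := N / p with hm
      have hmN : m < N := Nat.div_lt_self hNpos hp.one_lt
      have hmpos : 0 < m := Nat.div_pos (Nat.le_of_dvd hNpos hpdvd) hp.pos
      have hpow : π ^ m ≠ 1 := by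
        intro heq
        have : N ∣ m := orderOf_dvd_iff_pow_eq_one.mpr heq
        exact absurd (Nat.le_of_dvd hmpos this) (not_le.mpr hmN)
      have hcard := hcon m hpow
      -- card of non-fixed points
      have hsplit := Finset.card_filter_add_card_filter_not
        (s := Finset.univ) (p := fun x : Fin n => (π ^ m) x = x)
      have hScard : n ≤ 2 * (Finset.univ.filter
          (fun x : Fin n => ¬ (π ^ m) x = x)).card := by
        simp only [Finset.card_univ, Fintype.card_fin] at hsplit
        omega
      -- non-fixed points have full p-part in their cycle length
      have hptfull : ∀ x : Fin n, ¬ (π ^ m) x = x → a ≤ (c x).factorization p := by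
        intro x hx
        by_contra hlt
        push_neg at hlt
        apply hx
        rw [hfix]
        rw [← Nat.factorization_le_iff_dvd (hcpos x).ne' hmpos.ne']
        intro q
        have hqle : (c x).factorization q ≤ N.factorization q :=
          (Nat.factorization_le_iff_dvd (hcpos x).ne' hNpos.ne').mpr (hcdvd x) q
        rw [hm, Nat.factorization_div hpdvd, hp.factorization]
        simp only [Finsupp.coe_tsub, Pi.sub_apply, Finsupp.single_apply]
        split_ifs with hq
        · subst hq; omega
        · omega
      -- sum up the p-adic valuations
      have hsum : a * n ≤ 2 * ∑ x : Fin n, (c x).factorization p := by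
        have h1 : a * (Finset.univ.filter
            (fun x : Fin n => ¬ (π ^ m) x = x)).card ≤
            ∑ x : Fin n, (c x).factorization p := by
          calc a * (Finset.univ.filter (fun x : Fin n => ¬ (π ^ m) x = x)).card
              = ∑ x ∈ Finset.univ.filter (fun x : Fin n => ¬ (π ^ m) x = x), a := by
                rw [Finset.sum_const, smul_eq_mul, mul_comm]
            _ ≤ ∑ x ∈ Finset.univ.filter (fun x : Fin n => ¬ (π ^ m) x = x),
                  (c x).factorization p := Finset.sum_le_sum fun x hx =>
                    hptfull x (Finset.mem_filter.mp hx).2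
            _ ≤ ∑ x : Fin n, (c x).factorization p :=
                Finset.sum_le_sum_of_subset (Finset.filter_subset _ _)
        calc a * n ≤ a * (2 * (Finset.univ.filter
              (fun x : Fin n => ¬ (π ^ m) x = x)).card) :=
            Nat.mul_le_mul_left a hScard
          _ = 2 * (a * (Finset.univ.filter
              (fun x : Fin n => ¬ (π ^ m) x = x)).card) := by ring
          _ ≤ 2 * ∑ x : Fin n, (c x).factorization p := Nat.mul_le_mul_left 2 h1
      have hPfact : P.factorization p = ∑ x : Fin n, (c x).factorization p := by
        rw [hP, Nat.factorization_prod (fun x _ => (hcpos x).ne')]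
        simp [Finset.sum_apply']
      rw [Nat.factorization_pow, Nat.factorization_pow]
      simp only [Finsupp.smul_apply, smul_eq_mul]
      rw [hPfact, ← ha]
      calc n * a = a * n := mul_comm _ _
        _ ≤ 2 * ∑ x : Fin n, (c x).factorization p := hsum
  -- derive the contradiction
  have h1 : N ^ n ≤ P ^ 2 := Nat.le_of_dvd (pow_pos (Nat.pos_of_ne_zero hPne) 2) key
  have h2 : P ^ 2 ≤ (n ^ n) ^ 2 := Nat.pow_le_pow_left hPle 2
  have h3 : (n ^ n) ^ 2 = (n ^ 2) ^ n := by ring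
  have h4 : (n ^ 2) ^ n < N ^ n :=
    Nat.pow_lt_pow_left h (by omega)
  omega
end
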